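/- Let f be an (n,N,M) F-sequence with M < N−2 and suppose f_{N−1,M+1} ≠ f_{N−1,N−1}. Then L_f(N,M+1) ≤ U_f(N,M+1), and extending f by setting f_{N,M+1} equal to either L_f(N,M+1) or U_f(N,M+1) yields an (n,N,M+1) F-sequence. -/
import Mathlib


/-- The lower bound `L_f(i,j)` used in the F-sequence constraints. -/
def Lb (f : ℤ → ℤ → ℤ) (i j : ℤ) : ℤ :=
  max (f i (j - 1)) (max (f (i - 1) j - 1)
    (f i (j - 1) + f (i - 1) j - f (i - 1) (j - 1) - 1))

/-- The upper bound `U_f(i,j)` used in the F-sequence constraints. -/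
def Ub (f : ℤ → ℤ → ℤ) (i j : ℤ) : ℤ :=
  min (f (i - 1) j) (f i (j - 1) + f (i - 1) j - f (i - 1) (j - 1))

/-- The index domain of an `(n,N,M)` F-sequence:
`{(i,j) : 0 ≤ j ≤ i ≤ N-1} ∪ {(N,j) : 0 ≤ j ≤ M}`. -/
def ValidIdx (N M i j : ℤ) : Prop :=
  (0 ≤ j ∧ j ≤ i ∧ i ≤ N - 1) ∨ (i = N ∧ 0 ≤ j ∧ j ≤ M)

/-- An `(n,N,M)` **F**-sequence: a partially filled F-matrix, filled on the domain
`{(i,j) : 0 ≤ j ≤ i ≤ N-1} ∪ {(N,j) : 0 ≤ j ≤ M}` (and zero elsewhere). -/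
structure IsFSeq (n N M : ℕ) (f : ℤ → ℤ → ℤ) : Prop where
  hMN : M ≤ N
  hN2n : (N : ℤ) ≤ 2 * (n : ℤ) - 3
  zero_outside : ∀ i j : ℤ, ¬ ValidIdx (N : ℤ) (M : ℤ) i j → f i j = 0
  nonneg : ∀ i j : ℤ, 0 ≤ f i j
  diag_pos : ∀ i : ℤ, 0 ≤ i → i ≤ max ((N : ℤ) - 1) (M : ℤ) → 0 < f i i
  diag_first : f 0 0 = 2
  diag_step : ∀ i : ℤ, 1 ≤ i → i ≤ max ((N : ℤ) - 1) (M : ℤ) →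
      f i i = f (i - 1) (i - 1) + 1 ∨ f i i = f (i - 1) (i - 1) - 1
  diag_bound : ∀ i : ℤ, 0 ≤ i → i ≤ max ((N : ℤ) - 1) (M : ℤ) →
      f i i ≤ 2 * (n : ℤ) - i - 2
  bounds : ∀ i j : ℤ, ValidIdx (N : ℤ) (M : ℤ) i j → 0 ≤ j → j ≤ i - 2 →
      Lb f i j ≤ f i j ∧ f i j ≤ Ub f i j
  special : ∀ i j : ℤ, ValidIdx (N : ℤ) (M : ℤ) i j → 0 ≤ j → j ≤ i - 1 →
      f (i - 1) j = f (i - 1) (i - 1) → f i j = f (i - 1) (i - 1) - 1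

/-- extending an `(n,N,M)` F-sequence (with `M < N-2` and
`f_{N-1,M+1} ≠ f_{N-1,N-1}`) at `(N,M+1)` by either `L_f(N,M+1)` or `U_f(N,M+1)`
yields an `(n,N,M+1)` F-sequence. -/
theorem fseq_extend_row (n N M : ℕ) (f : ℤ → ℤ → ℤ)
    (hf : IsFSeq n N M f) (h : (M : ℤ) < (N : ℤ) - 2)
    (hne : f ((N : ℤ) - 1) ((M : ℤ) + 1) ≠ f ((N : ℤ) - 1) ((N : ℤ) - 1)) :
    Lb f (N : ℤ) ((M : ℤ) + 1) ≤ Ub f (N : ℤ) ((M : ℤ) + 1) ∧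
    ∀ v : ℤ, (v = Lb f (N : ℤ) ((M : ℤ) + 1) ∨ v = Ub f (N : ℤ) ((M : ℤ) + 1)) →
      IsFSeq n N (M + 1)
        (fun i j => if i = (N : ℤ) ∧ j = (M : ℤ) + 1 then v else f i j) := by
  obtain ⟨hMN, hN2n, hzero, hnn, hdp, hd0, hds, hdb, hb, hsp⟩ := hf
  have hM0 : (0:ℤ) ≤ (M:ℤ) := Int.ofNat_nonneg M
  have hN3 : (3:ℤ) ≤ (N:ℤ) := by omega
  -- bounds at (N, M)
  have hbNM := hb (N:ℤ) (M:ℤ) (Or.inr ⟨rfl, hM0, le_refl _⟩) hM0 (by omega)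
  simp only [Lb, Ub] at hbNM
  have h1 : f (N:ℤ) (M:ℤ) ≤ f ((N:ℤ)-1) (M:ℤ) := le_trans hbNM.2 (min_le_left _ _)
  have h2 : f ((N:ℤ)-1) (M:ℤ) - 1 ≤ f (N:ℤ) (M:ℤ) :=
    le_trans (le_trans (le_max_left _ _) (le_max_right _ _)) hbNM.1
  -- key monotonicity: f (N-1) M ≤ f (N-1) (M+1)
  have ha : f ((N:ℤ)-1) (M:ℤ) ≤ f ((N:ℤ)-1) ((M:ℤ)+1) := by
    rcases lt_or_ge ((M:ℤ)+1) ((N:ℤ)-2) with hlt | hge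
    · have hbb := (hb ((N:ℤ)-1) ((M:ℤ)+1)
        (Or.inl ⟨by omega, by omega, by omega⟩) (by omega) (by omega)).1
      simp only [Lb, add_sub_cancel_right] at hbb
      exact le_trans (le_max_left _ _) hbb
    · -- M = N - 3
      have hMe : (M:ℤ) = (N:ℤ) - 3 := by omega
      have e1 : f ((N:ℤ)-1) ((N:ℤ)-2) = f ((N:ℤ)-2) ((N:ℤ)-2) - 1 := by
        have h' := hsp ((N:ℤ)-1) ((N:ℤ)-2)
          (Or.inl ⟨by omega, by omega, by omega⟩) (by omega) (by omega)
          (by rw [show (N:ℤ)-1-1 = (N:ℤ)-2 from by ring])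
        rwa [show (N:ℤ)-1-1 = (N:ℤ)-2 from by ring] at h'
      have e2 : f ((N:ℤ)-2) ((N:ℤ)-3) = f ((N:ℤ)-3) ((N:ℤ)-3) - 1 := by
        have h' := hsp ((N:ℤ)-2) ((N:ℤ)-3)
          (Or.inl ⟨by omega, by omega, by omega⟩) (by omega) (by omega)
          (by rw [show (N:ℤ)-2-1 = (N:ℤ)-3 from by ring])
        rwa [show (N:ℤ)-2-1 = (N:ℤ)-3 from by ring] at h'
      have hstep := hds ((N:ℤ)-2) (by omega) (by omega)
      rw [show (N:ℤ)-2-1 = (N:ℤ)-3 from by ring] at hstep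
      rw [show (M:ℤ)+1 = (N:ℤ)-2 from by omega, show (M:ℤ) = (N:ℤ)-3 from by omega]
      rcases hstep with hup | hdown
      · -- f(N-2)(N-2) = f(N-3)(N-3)+1 ; use upper bound at (N-1, N-3)
        have hbb := (hb ((N:ℤ)-1) ((N:ℤ)-3)
          (Or.inl ⟨by omega, by omega, by omega⟩) (by omega) (by omega)).2
        simp only [Ub] at hbb
        rw [show (N:ℤ)-1-1 = (N:ℤ)-2 from by ring] at hbb
        have := le_trans hbb (min_le_left _ _)
        omega
      · -- f(N-2)(N-2) = f(N-3)(N-3)-1 ; special rule forces equality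
        have h' := hsp ((N:ℤ)-1) ((N:ℤ)-3)
          (Or.inl ⟨by omega, by omega, by omega⟩) (by omega) (by omega)
          (by rw [show (N:ℤ)-1-1 = (N:ℤ)-2 from by ring]; omega)
        rw [show (N:ℤ)-1-1 = (N:ℤ)-2 from by ring] at h'
        omega
  have hLU : Lb f (N:ℤ) ((M:ℤ)+1) ≤ Ub f (N:ℤ) ((M:ℤ)+1) := by
    simp only [Lb, Ub, add_sub_cancel_right]
    omega
  have hLnn : 0 ≤ Lb f (N:ℤ) ((M:ℤ)+1) := by
    simp only [Lb, add_sub_cancel_right]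
    exact le_trans (hnn _ _) (le_max_left _ _)
  refine ⟨hLU, ?_⟩
  intro v hv
  have hv0 : 0 ≤ v := by
    rcases hv with rfl | rfl
    exacts [hLnn, le_trans hLnn hLU]
  refine ⟨by omega, hN2n, ?_, ?_, ?_, ?_, ?_, ?_, ?_, ?_⟩
  · -- zero_outside
    intro i j hnot
    have hc : ¬ (i = (N:ℤ) ∧ j = (M:ℤ)+1) := by
      rintro ⟨rfl, rfl⟩
      exact hnot (Or.inr ⟨rfl, by omega, by push_cast; omega⟩)
    simp only [hc, if_false]
    apply hzero
    intro hvij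
    apply hnot
    unfold ValidIdx at hvij ⊢
    push_cast
    omega
  · -- nonneg
    intro i j
    show 0 ≤ if i = (N:ℤ) ∧ j = (M:ℤ)+1 then v else f i j
    split_ifs with hc
    · exact hv0
    · exact hnn i j
  · -- diag_pos
    intro i h0 hle
    push_cast at hle
    have hc : ¬ (i = (N:ℤ) ∧ i = (M:ℤ)+1) := by omega
    simp only [hc, if_false]
    exact hdp i h0 (by omega)
  · -- diag_first
    have hc : ¬ ((0:ℤ) = (N:ℤ) ∧ (0:ℤ) = (M:ℤ)+1) := by omega
    simp only [hc, if_false]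
    exact hd0
  · -- diag_step
    intro i h1' h2'
    push_cast at h2'
    have hc : ¬ (i = (N:ℤ) ∧ i = (M:ℤ)+1) := by omega
    have hc' : ¬ (i - 1 = (N:ℤ) ∧ i - 1 = (M:ℤ)+1) := by omega
    simp only [hc, hc', if_false]
    exact hds i h1' (by omega)
  · -- diag_bound
    intro i h0 hle
    push_cast at hle
    have hc : ¬ (i = (N:ℤ) ∧ i = (M:ℤ)+1) := by omega
    simp only [hc, if_false]
    exact hdb i h0 (by omega)
  · -- bounds
    intro i j hvij h0 h2'
    push_cast at hvij
    by_cases hij : i = (N:ℤ) ∧ j = (M:ℤ)+1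
    · obtain ⟨hi, hj⟩ := hij
      subst hi; subst hj
      have c1 : ¬ ((N:ℤ) = (N:ℤ) ∧ (M:ℤ)+1-1 = (M:ℤ)+1) := by omega
      have c2 : ¬ ((N:ℤ)-1 = (N:ℤ) ∧ (M:ℤ)+1 = (M:ℤ)+1) := by omega
      have c3 : ¬ ((N:ℤ)-1 = (N:ℤ) ∧ (M:ℤ)+1-1 = (M:ℤ)+1) := by omega
      rcases hv with rfl | rfl <;>
      · simp only [Lb, Ub, eq_self_iff_true, and_self, if_true, c1, c2, c3, if_false,
          add_sub_cancel_right] at hLU ⊢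
        omega
    · have hvold : ValidIdx (N:ℤ) (M:ℤ) i j := by
        unfold ValidIdx at hvij ⊢
        omega
      have hd : (i ≤ (N:ℤ) - 1) ∨ (i = (N:ℤ) ∧ j ≤ (M:ℤ)) := by
        unfold ValidIdx at hvold; omega
      have c0 : ¬ (i = (N:ℤ) ∧ j = (M:ℤ)+1) := hij
      have c1 : ¬ (i = (N:ℤ) ∧ j - 1 = (M:ℤ)+1) := by omega
      have c2 : ¬ (i - 1 = (N:ℤ) ∧ j = (M:ℤ)+1) := by omega
      have c3 : ¬ (i - 1 = (N:ℤ) ∧ j - 1 = (M:ℤ)+1) := by omega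
      have hbb := hb i j hvold h0 h2'
      simp only [Lb, Ub] at hbb ⊢
      simp only [c0, c1, c2, c3, if_false]
      exact hbb
  · -- special
    intro i j hvij h0 h1' heq
    push_cast at hvij
    have c2 : ¬ (i - 1 = (N:ℤ) ∧ j = (M:ℤ)+1) := by
      unfold ValidIdx at hvij; omega
    have c4 : ¬ (i - 1 = (N:ℤ) ∧ i - 1 = (M:ℤ)+1) := by
      unfold ValidIdx at hvij; omega
    simp only [c2, c4, if_false] at heq ⊢
    by_cases hij : i = (N:ℤ) ∧ j = (M:ℤ)+1
    · obtain ⟨hi, hj⟩ := hij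
      subst hi; subst hj
      exact absurd heq hne
    · have hvold : ValidIdx (N:ℤ) (M:ℤ) i j := by
        unfold ValidIdx at hvij ⊢
        omega
      simp only [hij, if_false]
      exact hsp i j hvold h0 h1' heq
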